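/- Let f : (Fin n → ℝ) → EReal be any function. Then its convex conjugate f* is convex and lower semicontinuous. Moreover, if f is proper (never equal to −∞ and not identically +∞), then f** = f if and only if f is convex and lower semicontinuous. -/

import Mathlib

open Matrix

/-- The convex conjugate (Legendre–Fenchel transform) of an `EReal`-valued
function on `ℝⁿ`, with respect to the standard dot product. -/
noncomputable def conj {n : ℕ} (h : (Fin n → ℝ) → EReal) :
    (Fin n → ℝ) → EReal :=
  fun c => ⨆ x : Fin n → ℝ, ((c ⬝ᵥ x : ℝ) : EReal) - h x

/-- A function into `EReal` is convex if its epigraph is a convex set. -/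
def ConvexEReal {E : Type*} [AddCommMonoid E] [Module ℝ E]
    (h : E → EReal) : Prop :=
  Convex ℝ {p : E × ℝ | h p.1 ≤ (p.2 : EReal)}

section Auxiliary

variable {n : ℕ}

lemma dot_continuous (x : Fin n → ℝ) : Continuous fun c : Fin n → ℝ => c ⬝ᵥ x :=
  (continuous_id : Continuous (id : (Fin n → ℝ) → _)).dotProduct continuous_const

/-- The conjugate is lower semicontinuous. -/
lemma conj_lsc (f : (Fin n → ℝ) → EReal) : LowerSemicontinuous (conj f) := by
  apply lowerSemicontinuous_iSup
  intro x
  induction f x using EReal.rec with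
  | bot =>
    simp only [EReal.coe_sub_bot]
    exact lowerSemicontinuous_const
  | top =>
    simp only [EReal.sub_top]
    exact lowerSemicontinuous_const
  | coe r =>
    have : (fun c : Fin n → ℝ => ((c ⬝ᵥ x : ℝ) : EReal) - (r : EReal))
        = fun c => (((c ⬝ᵥ x - r : ℝ)) : EReal) := by
      funext c; rw [EReal.coe_sub]
    rw [this]
    have hc : Continuous fun c : Fin n → ℝ => ((c ⬝ᵥ x - r : ℝ) : EReal) :=
      continuous_coe_real_ereal.comp ((dot_continuous x).sub continuous_const)
    exact hc.lowerSemicontinuous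

/-- The conjugate is convex. -/
lemma conj_convex (f : (Fin n → ℝ) → EReal) : ConvexEReal (conj f) := by
  have hset : {p : (Fin n → ℝ) × ℝ | conj f p.1 ≤ (p.2 : EReal)}
      = ⋂ x : Fin n → ℝ, {p : (Fin n → ℝ) × ℝ | ((p.1 ⬝ᵥ x : ℝ) : EReal) - f x ≤ (p.2 : EReal)} := by
    ext p
    simp only [Set.mem_setOf_eq, Set.mem_iInter, conj, iSup_le_iff]
  rw [ConvexEReal, hset]
  apply convex_iInter
  intro x
  induction f x using EReal.rec with
  | bot =>
    simp only [EReal.coe_sub_bot]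
    have : {p : (Fin n → ℝ) × ℝ | (⊤ : EReal) ≤ (p.2 : EReal)} = ∅ := by
      ext p; simp [top_le_iff]
    rw [this]; exact convex_empty
  | top =>
    simp only [EReal.sub_top]
    have : {p : (Fin n → ℝ) × ℝ | (⊥ : EReal) ≤ (p.2 : EReal)} = Set.univ := by
      ext p; simp
    rw [this]; exact convex_univ
  | coe r =>
    have : {p : (Fin n → ℝ) × ℝ | ((p.1 ⬝ᵥ x : ℝ) : EReal) - (r : EReal) ≤ (p.2 : EReal)}
        = {p : (Fin n → ℝ) × ℝ | p.1 ⬝ᵥ x - p.2 ≤ r} := by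
      ext p
      rw [Set.mem_setOf_eq, Set.mem_setOf_eq, ← EReal.coe_sub, EReal.coe_le_coe_iff]
      constructor <;> intro h <;> linarith
    rw [this]
    refine convex_halfSpace_le ⟨fun p q => ?_, fun c p => ?_⟩ r
    · simp [add_dotProduct]; ring
    · simp [smul_dotProduct, smul_eq_mul]; ring

lemma ereal_sub_le_neg {a β : ℝ} {y : EReal} (hy : y ≠ ⊥) (h : ((a + β : ℝ) : EReal) ≤ y) :
    ((a : ℝ) : EReal) - y ≤ ((-β : ℝ) : EReal) := by
  induction y using EReal.rec with
  | bot => exact absurd rfl hy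
  | top => rw [EReal.sub_top]; exact bot_le
  | coe r =>
    rw [← EReal.coe_sub, EReal.coe_le_coe_iff]
    have : a + β ≤ r := EReal.coe_le_coe_iff.mp h
    linarith

/-- An affine minorant of `f` bounds the biconjugate of `f` from below. -/
lemma biconj_ge_of_minorant (f : (Fin n → ℝ) → EReal) (a : Fin n → ℝ) (β : ℝ)
    (hb : ∀ x, f x ≠ ⊥)
    (h : ∀ x, ((a ⬝ᵥ x + β : ℝ) : EReal) ≤ f x) (x₀ : Fin n → ℝ) :
    ((a ⬝ᵥ x₀ + β : ℝ) : EReal) ≤ conj (conj f) x₀ := by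
  have h1 : conj f a ≤ ((-β : ℝ) : EReal) :=
    iSup_le fun x => ereal_sub_le_neg (hb x) (h x)
  have h2 : ((a ⬝ᵥ x₀ + β : ℝ) : EReal) ≤ ((x₀ ⬝ᵥ a : ℝ) : EReal) - conj f a := by
    calc ((a ⬝ᵥ x₀ + β : ℝ) : EReal) = ((x₀ ⬝ᵥ a : ℝ) : EReal) - ((-β : ℝ) : EReal) := by
          rw [← EReal.coe_sub, EReal.coe_eq_coe_iff, dotProduct_comm]; ring
      _ ≤ ((x₀ ⬝ᵥ a : ℝ) : EReal) - conj f a := EReal.sub_le_sub le_rfl h1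
  exact h2.trans (le_iSup (fun c => ((x₀ ⬝ᵥ c : ℝ) : EReal) - conj f c) a)

/-- `f** ≤ f` when `f` never takes the value `⊥`. -/
lemma biconj_le (f : (Fin n → ℝ) → EReal) (hb : ∀ x, f x ≠ ⊥) (x : Fin n → ℝ) :
    conj (conj f) x ≤ f x := by
  apply iSup_le
  intro c
  have h1 : ((c ⬝ᵥ x : ℝ) : EReal) - f x ≤ conj f c :=
    le_iSup (fun y => ((c ⬝ᵥ y : ℝ) : EReal) - f y) x
  rw [dotProduct_comm]
  rcases eq_or_ne (f x) ⊤ with hfx | hfx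
  · rw [hfx]; exact le_top
  obtain ⟨r, hfx⟩ : ∃ r : ℝ, f x = (r : EReal) := by
    lift f x to ℝ using ⟨hfx, hb x⟩ with r hr
    exact ⟨r, rfl⟩
  rw [hfx] at h1 ⊢
  rcases eq_or_ne (conj f c) ⊥ with hc | hc
  · rw [hc, ← EReal.coe_sub] at h1
    exact absurd (le_bot_iff.mp h1) (EReal.coe_ne_bot _)
  rcases eq_or_ne (conj f c) ⊤ with hc2 | hc2
  · rw [hc2, EReal.sub_top]; exact bot_le
  obtain ⟨s, hs⟩ : ∃ s : ℝ, conj f c = (s : EReal) := by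
    lift conj f c to ℝ using ⟨hc2, hc⟩ with s hs
    exact ⟨s, rfl⟩
  rw [hs] at h1 ⊢
  rw [← EReal.coe_sub] at h1 ⊢
  rw [EReal.coe_le_coe_iff] at h1 ⊢
  linarith

/-- The epigraph of a lower semicontinuous function is closed. -/
lemma epi_closed {f : (Fin n → ℝ) → EReal} (hlsc : LowerSemicontinuous f) :
    IsClosed {p : (Fin n → ℝ) × ℝ | f p.1 ≤ (p.2 : EReal)} := by
  rw [← isOpen_compl_iff, isOpen_iff_mem_nhds]
  intro p hp
  rw [Set.mem_compl_iff, Set.mem_setOf_eq, not_le] at hp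
  obtain ⟨z, hz1, hz2⟩ := EReal.exists_between_coe_real hp
  refine mem_nhds_iff.mpr ⟨(Prod.fst ⁻¹' {x | (z : EReal) < f x}) ∩ (Prod.snd ⁻¹' Set.Iio z), ?_, ?_, ?_, ?_⟩
  · intro q ⟨hq1, hq2⟩
    rw [Set.mem_compl_iff, Set.mem_setOf_eq, not_le]
    exact lt_trans (EReal.coe_lt_coe_iff.mpr hq2) hq1
  · exact ((hlsc.isOpen_preimage z).preimage continuous_fst).inter
      (isOpen_Iio.preimage continuous_snd)
  · exact hz2
  · exact EReal.coe_lt_coe_iff.mp hz1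

/-- Representation of a continuous linear functional on `(Fin n → ℝ) × ℝ`. -/
lemma phi_repr (φ : ((Fin n → ℝ) × ℝ) →L[ℝ] ℝ) (x : Fin n → ℝ) (r : ℝ) :
    φ (x, r) = (fun i => φ (Pi.single i 1, 0)) ⬝ᵥ x + φ (0, 1) * r := by
  have hx : (x, r) = (∑ i : Fin n, x i • ((Pi.single i 1 : Fin n → ℝ), (0:ℝ)))
      + r • ((0 : Fin n → ℝ), (1:ℝ)) := by
    rw [Prod.ext_iff]
    constructor
    · funext j
      simp [Prod.fst_sum, Finset.sum_apply, Pi.single_apply]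
    · simp [Prod.snd_sum]
  rw [hx, map_add, map_sum, _root_.map_smul]
  simp only [_root_.map_smul, smul_eq_mul, dotProduct]
  rw [mul_comm]
  congr 1
  apply Finset.sum_congr rfl; intro i _; ring

variable {f : (Fin n → ℝ) → EReal}

/-- A separating functional for the epigraph has nonnegative vertical slope. -/
lemma slope_nonneg {a : Fin n → ℝ} {s u : ℝ} {x₁ : Fin n → ℝ} {r₁ : ℝ}
    (hx₁ : f x₁ ≤ (r₁ : EReal))
    (hsep : ∀ q ∈ {p : (Fin n → ℝ) × ℝ | f p.1 ≤ (p.2 : EReal)}, u < a ⬝ᵥ q.1 + s * q.2) :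
    0 ≤ s := by
  by_contra hs
  push_neg at hs
  set r := max r₁ ((u - a ⬝ᵥ x₁ - 1) / s) with hr
  have hmem : ((x₁, r) : (Fin n → ℝ) × ℝ) ∈ {p : (Fin n → ℝ) × ℝ | f p.1 ≤ (p.2 : EReal)} :=
    le_trans hx₁ (EReal.coe_le_coe_iff.mpr (le_max_left _ _))
  have h1 : (u - a ⬝ᵥ x₁ - 1) / s ≤ r := le_max_right _ _
  have h2 : s * r ≤ s * ((u - a ⬝ᵥ x₁ - 1) / s) := mul_le_mul_of_nonpos_left h1 hs.le
  have h3 : s * ((u - a ⬝ᵥ x₁ - 1) / s) = u - a ⬝ᵥ x₁ - 1 := mul_div_cancel₀ _ hs.ne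
  have := hsep (x₁, r) hmem
  simp only at this
  linarith

/-- A separating functional with positive vertical slope gives an affine minorant. -/
lemma minorant_of_pos_slope (hb : ∀ x, f x ≠ ⊥) {a : Fin n → ℝ} {s u : ℝ} (hs : 0 < s)
    (hsep : ∀ q ∈ {p : (Fin n → ℝ) × ℝ | f p.1 ≤ (p.2 : EReal)}, u < a ⬝ᵥ q.1 + s * q.2) :
    ∀ x, ((((-s⁻¹) • a) ⬝ᵥ x + u / s : ℝ) : EReal) ≤ f x := by
  intro x
  rcases eq_or_ne (f x) ⊤ with hfx | hfx
  · rw [hfx]; exact le_top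
  obtain ⟨r, hr⟩ : ∃ r : ℝ, f x = (r : EReal) := by
    lift f x to ℝ using ⟨hfx, hb x⟩ with r hr
    exact ⟨r, rfl⟩
  rw [hr, EReal.coe_le_coe_iff]
  have hmem : ((x, r) : (Fin n → ℝ) × ℝ) ∈ {p : (Fin n → ℝ) × ℝ | f p.1 ≤ (p.2 : EReal)} := by
    rw [Set.mem_setOf_eq, hr]
  have := hsep (x, r) hmem
  simp only at this
  rw [smul_dotProduct, smul_eq_mul, div_eq_inv_mul]
  have hs' : s⁻¹ * s = 1 := inv_mul_cancel₀ hs.ne'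
  have h4 : s⁻¹ * u < s⁻¹ * (a ⬝ᵥ x) + s⁻¹ * s * r := by
    have := mul_lt_mul_of_pos_left this (inv_pos.mpr hs)
    nlinarith [this]
  rw [hs'] at h4
  linarith

/-- Fenchel–Moreau: `f ≤ f**` for a proper convex lower semicontinuous function. -/
lemma biconj_ge (hb : ∀ x, f x ≠ ⊥)
    (hne : ∃ x, f x ≠ ⊤) (hconv : ConvexEReal f) (hlsc : LowerSemicontinuous f)
    (x₀ : Fin n → ℝ) : f x₀ ≤ conj (conj f) x₀ := by
  by_contra hcon
  push_neg at hcon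
  obtain ⟨t, ht1, ht2⟩ := EReal.exists_between_coe_real hcon
  have hnotin : ((x₀, t) : (Fin n → ℝ) × ℝ) ∉ {p : (Fin n → ℝ) × ℝ | f p.1 ≤ (p.2 : EReal)} := by
    intro h
    exact absurd (lt_of_le_of_lt h ht2) (lt_irrefl _)
  obtain ⟨φ, u, hu1, hu2⟩ := geometric_hahn_banach_point_closed hconv (epi_closed hlsc) hnotin
  set a : Fin n → ℝ := fun i => φ (Pi.single i 1, 0) with ha
  set s : ℝ := φ (0, 1) with hsdef
  have hrepr : ∀ p : (Fin n → ℝ) × ℝ, φ p = a ⬝ᵥ p.1 + s * p.2 := by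
    intro p
    have := phi_repr φ p.1 p.2
    rwa [Prod.mk.eta] at this
  have hu1' : a ⬝ᵥ x₀ + s * t < u := by rw [← hrepr (x₀, t)]; exact hu1
  have hsep : ∀ q ∈ {p : (Fin n → ℝ) × ℝ | f p.1 ≤ (p.2 : EReal)}, u < a ⬝ᵥ q.1 + s * q.2 := by
    intro q hq; rw [← hrepr q]; exact hu2 q hq
  obtain ⟨x₁, hx₁⟩ := hne
  obtain ⟨r₁, hr₁⟩ : ∃ r : ℝ, f x₁ = (r : EReal) := by
    lift f x₁ to ℝ using ⟨hx₁, hb x₁⟩ with r hr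
    exact ⟨r, rfl⟩
  have hs0 : 0 ≤ s := slope_nonneg (le_of_eq hr₁) hsep
  have hlt : ∀ (A : Fin n → ℝ) (β : ℝ), (∀ x, ((A ⬝ᵥ x + β : ℝ) : EReal) ≤ f x) →
      A ⬝ᵥ x₀ + β < t := by
    intro A β hm
    exact EReal.coe_lt_coe_iff.mp (lt_of_le_of_lt (biconj_ge_of_minorant f A β hb hm x₀) ht1)
  rcases hs0.eq_or_lt with hs | hs
  · -- s = 0 case
    rw [← hs] at hu1' hsep
    simp only [zero_mul, add_zero] at hu1' hsep
    have hnotin2 : ((x₁, r₁ - 1) : (Fin n → ℝ) × ℝ)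
        ∉ {p : (Fin n → ℝ) × ℝ | f p.1 ≤ (p.2 : EReal)} := by
      intro hmem
      rw [Set.mem_setOf_eq, hr₁, EReal.coe_le_coe_iff] at hmem
      simp only at hmem
      linarith
    obtain ⟨φ', u', hv1, hv2⟩ := geometric_hahn_banach_point_closed hconv (epi_closed hlsc) hnotin2
    set a' : Fin n → ℝ := fun i => φ' (Pi.single i 1, 0) with ha'
    set s' : ℝ := φ' (0, 1) with hs'def
    have hrepr' : ∀ p : (Fin n → ℝ) × ℝ, φ' p = a' ⬝ᵥ p.1 + s' * p.2 := by
      intro p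
      have := phi_repr φ' p.1 p.2
      rwa [Prod.mk.eta] at this
    have hv1' : a' ⬝ᵥ x₁ + s' * (r₁ - 1) < u' := by rw [← hrepr' (x₁, r₁ - 1)]; exact hv1
    have hsep' : ∀ q ∈ {p : (Fin n → ℝ) × ℝ | f p.1 ≤ (p.2 : EReal)},
        u' < a' ⬝ᵥ q.1 + s' * q.2 := by
      intro q hq; rw [← hrepr' q]; exact hv2 q hq
    have hs0' : 0 ≤ s' := slope_nonneg (le_of_eq hr₁) hsep'
    have hmem₁ : ((x₁, r₁) : (Fin n → ℝ) × ℝ) ∈ {p : (Fin n → ℝ) × ℝ | f p.1 ≤ (p.2 : EReal)} :=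
      le_of_eq hr₁
    have hspos : 0 < s' := by
      rcases hs0'.eq_or_lt with h0 | h0
      · exfalso
        have h1 := hsep' (x₁, r₁) hmem₁
        simp only at h1
        rw [← h0] at h1 hv1'
        simp only [zero_mul, add_zero] at h1 hv1'
        linarith
      · exact h0
    have hd : 0 < u - a ⬝ᵥ x₀ := by linarith
    set lam : ℝ := max 1 ((t * s' - u' + a' ⬝ᵥ x₀) / (u - a ⬝ᵥ x₀) + 1) with hlam
    have hlampos : 0 < lam := lt_of_lt_of_le one_pos (le_max_left _ _)
    have hlam2 : t * s' - u' + a' ⬝ᵥ x₀ < lam * (u - a ⬝ᵥ x₀) := by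
      have h1 : (t * s' - u' + a' ⬝ᵥ x₀) / (u - a ⬝ᵥ x₀) + 1 ≤ lam := le_max_right _ _
      have h2 : (t * s' - u' + a' ⬝ᵥ x₀) / (u - a ⬝ᵥ x₀) * (u - a ⬝ᵥ x₀)
          = t * s' - u' + a' ⬝ᵥ x₀ := div_mul_cancel₀ _ hd.ne'
      nlinarith
    have hsepc : ∀ q ∈ {p : (Fin n → ℝ) × ℝ | f p.1 ≤ (p.2 : EReal)},
        u' + lam * u < (a' + lam • a) ⬝ᵥ q.1 + s' * q.2 := by
      intro q hq
      have h1 := hsep' q hq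
      have h2 := hsep q hq
      rw [add_dotProduct, smul_dotProduct, smul_eq_mul]
      nlinarith
    have hm := minorant_of_pos_slope hb hspos hsepc
    have hfin := hlt _ _ hm
    rw [smul_dotProduct, smul_eq_mul, add_dotProduct, smul_dotProduct, smul_eq_mul,
      div_eq_inv_mul] at hfin
    have h4 := mul_lt_mul_of_pos_left hfin hspos
    have key : s' * (-s'⁻¹ * (a' ⬝ᵥ x₀ + lam * (a ⬝ᵥ x₀)) + s'⁻¹ * (u' + lam * u))
        = (u' + lam * u) - (a' ⬝ᵥ x₀ + lam * (a ⬝ᵥ x₀)) := by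
      field_simp
      ring
    rw [key] at h4
    linarith
  · -- s > 0 case
    have hm := minorant_of_pos_slope hb hs hsep
    have hfin := hlt _ _ hm
    rw [smul_dotProduct, smul_eq_mul, div_eq_inv_mul] at hfin
    have h4 := mul_lt_mul_of_pos_left hfin hs
    have key : s * (-s⁻¹ * (a ⬝ᵥ x₀) + s⁻¹ * u) = u - a ⬝ᵥ x₀ := by
      field_simp
      ring
    rw [key] at h4
    linarith

end Auxiliary

/-- The conjugate of any function is convex and lower semicontinuous; and a
proper function equals its biconjugate iff it is convex and lower
semicontinuous. -/
theorem conj_convex_lsc_and_biconj (n : ℕ) (f : (Fin n → ℝ) → EReal) :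
    ConvexEReal (conj f) ∧ LowerSemicontinuous (conj f) ∧
      ((∀ x, f x ≠ ⊥) ∧ (∃ x, f x ≠ ⊤) →
        (conj (conj f) = f ↔ ConvexEReal f ∧ LowerSemicontinuous f)) := by
  refine ⟨conj_convex f, conj_lsc f, ?_⟩
  rintro ⟨hb, hne⟩
  constructor
  · intro h
    rw [← h]
    exact ⟨conj_convex _, conj_lsc _⟩
  · rintro ⟨hconv, hlsc⟩
    funext x
    exact le_antisymm (biconj_le f hb x) (biconj_ge hb hne hconv hlsc x)
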